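/- Let 0 → (A_i) → (B_i) → (C_i) → 0 be a short exact sequence of inverse systems of abelian groups indexed by the natural numbers. If the system (A_i) satisfies the Mittag-Leffler condition, then the induced sequence 0 → lim A_i → lim B_i → lim C_i → 0 of inverse limits is exact. -/

import Mathlib

/-- The iterated transition map `A (i + k) →+ A i` of an inverse system of abelian
groups indexed by `ℕ`. -/
def iterTrans {A : ℕ → Type*} [∀ i, AddCommGroup (A i)]
    (f : ∀ i, A (i + 1) →+ A i) (i : ℕ) : ∀ k : ℕ, A (i + k) →+ A i
  | 0 => AddMonoidHom.id _
  | (k + 1) => (iterTrans f i k).comp (f (i + k))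

/-- The inverse limit of an inverse system of abelian groups indexed by `ℕ`,
as a subgroup of the product. -/
def invLim {A : ℕ → Type*} [∀ i, AddCommGroup (A i)]
    (f : ∀ i, A (i + 1) →+ A i) : AddSubgroup (∀ i, A i) where
  carrier := {a | ∀ i, f i (a (i + 1)) = a i}
  zero_mem' := by intro i; simp
  add_mem' := by intro a b ha hb i; simp [ha i, hb i]
  neg_mem' := by intro a ha i; simp [ha i]

/-- An inverse system of abelian groups satisfies the Mittag-Leffler condition if
for each `i` the decreasing chain of images of `A (i+k) →+ A i` stabilizes. -/
def MittagLeffler {A : ℕ → Type*} [∀ i, AddCommGroup (A i)]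
    (f : ∀ i, A (i + 1) →+ A i) : Prop :=
  ∀ i, ∃ k₀, ∀ k, k₀ ≤ k → (iterTrans f i k).range = (iterTrans f i k₀).range

set_option linter.unusedSectionVars false
section aux
variable {A : ℕ → Type*} [∀ i, AddCommGroup (A i)]

/-- cast along an index equality -/
def cA {m n : ℕ} (e : m = n) (x : A m) : A n := e ▸ x

lemma cA_cA {m n : ℕ} (e : m = n) (x : A n) : cA (A := A) e (cA e.symm x) = x := by
  subst e; rfl

lemma a_cA (a : ∀ i, A i) {m n : ℕ} (e : m = n) : cA (A := A) e (a m) = a n := by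
  subst e; rfl

lemma f_cA (f : ∀ i, A (i + 1) →+ A i) {m n : ℕ} (e : m = n) (e' : m + 1 = n + 1)
    (x : A (m + 1)) : f n (cA (A := A) e' x) = cA e (f m x) := by
  subst e; rfl

lemma iter_left (f : ∀ i, A (i + 1) →+ A i) (i : ℕ) :
    ∀ (m : ℕ) (x : A (i + 1 + m)),
      f i (iterTrans f (i + 1) m x) = iterTrans f i (m + 1) (cA (by omega) x)
  | 0, x => rfl
  | (m + 1), x => by
    show f i (iterTrans f (i+1) m (f (i+1+m) x)) =
      iterTrans f i (m+1) (f (i+(m+1)) (cA (by omega) x))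
    rw [iter_left f i m (f (i+1+m) x)]
    congr 1
    rw [f_cA f (show i+1+m = i+(m+1) by omega)]
end aux

lemma exists_chain {A : ℕ → Type*} [∀ i, AddCommGroup (A i)] (f : ∀ i, A (i + 1) →+ A i)
    (S : ∀ i, AddSubgroup (A i)) (t : ∀ i, A i)
    (hsurj : ∀ i, ∀ x ∈ S i, ∃ y ∈ S (i + 1), f i y = x)
    (ht : ∀ i, t i ∈ S i) :
    ∃ z : ∀ i, A i, ∀ i, z i - f i (z (i + 1)) = t i := by
  let step : ∀ i, {v : A i // v ∈ S i} → {v : A (i + 1) // v ∈ S (i + 1)} := fun i p =>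
    ⟨(hsurj i (p.1 - t i) (sub_mem p.2 (ht i))).choose,
      (hsurj i (p.1 - t i) (sub_mem p.2 (ht i))).choose_spec.1⟩
  let Z : ∀ i, {v : A i // v ∈ S i} := fun n => Nat.rec ⟨0, (S 0).zero_mem⟩ step n
  refine ⟨fun i => (Z i).1, fun i => ?_⟩
  have h : f i (Z (i + 1)).1 = (Z i).1 - t i :=
    (hsurj i ((Z i).1 - t i) (sub_mem (Z i).2 (ht i))).choose_spec.2
  rw [h]; abel

/-- partial maxima of `k + 1` -/
def stairMax (k : ℕ → ℕ) : ℕ → ℕ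
  | 0 => k 0 + 1
  | (i + 1) => max (stairMax k i) (k (i + 1) + 1)

lemma stairMax_ge (k : ℕ → ℕ) (i : ℕ) : k i + 1 ≤ stairMax k i := by
  cases i with
  | zero => simp [stairMax]
  | succ n => simp [stairMax]

lemma stairMax_mono (k : ℕ → ℕ) (i : ℕ) : stairMax k i ≤ stairMax k (i + 1) := by
  simp [stairMax]

lemma lim1_vanish {A : ℕ → Type*} [∀ i, AddCommGroup (A i)] (f : ∀ i, A (i + 1) →+ A i)
    (hML : ∀ i, ∃ k₀, ∀ k, k₀ ≤ k → (iterTrans f i k).range = (iterTrans f i k₀).range)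
    (a : ∀ i, A i) :
    ∃ x : ∀ i, A i, ∀ i, x i - f i (x (i + 1)) = a i := by
  set k0 : ℕ → ℕ := fun i => (hML i).choose with hk0def
  have hk0 : ∀ i k, k0 i ≤ k →
      (iterTrans f i k).range = (iterTrans f i (k0 i)).range := fun i => (hML i).choose_spec
  set A' : ∀ i, AddSubgroup (A i) := fun i => (iterTrans f i (k0 i)).range with hA'def
  -- surjectivity of f i on stable images
  have hsurj : ∀ i, ∀ x ∈ A' i, ∃ y ∈ A' (i + 1), f i y = x := by
    intro i x hx
    set m := max (k0 i) (k0 (i + 1)) with hm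
    have h1 : (iterTrans f i (m + 1)).range = A' i := hk0 i (m + 1) (by omega)
    have h2 : (iterTrans f (i + 1) m).range = A' (i + 1) := hk0 (i + 1) m (by omega)
    rw [← h1] at hx
    obtain ⟨w, hw⟩ := hx
    have e : i + 1 + m = i + (m + 1) := by omega
    refine ⟨iterTrans f (i + 1) m (cA e.symm w), ?_, ?_⟩
    · rw [← h2]; exact ⟨_, rfl⟩
    · rw [iter_left f i m, cA_cA]; exact hw
  set N : ℕ → ℕ := fun i => stairMax k0 i with hN
  set G : ∀ i, ℕ → A i := fun i j => iterTrans f i j (a (i + j)) with hG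
  set y : ∀ i, A i := fun i => ∑ j ∈ Finset.range (N i), G i j with hy
  set t : ∀ i, A i := fun i => ∑ j ∈ Finset.Ico (N i) (N (i + 1) + 1), G i j with htdef
  have hNge : ∀ i, k0 i + 1 ≤ N i := stairMax_ge k0
  have hNmono : ∀ i, N i ≤ N (i + 1) := stairMax_mono k0
  -- t i ∈ A' i
  have ht : ∀ i, t i ∈ A' i := by
    intro i
    apply sum_mem
    intro j hj
    rw [Finset.mem_Ico] at hj
    have : (iterTrans f i j).range = A' i := hk0 i j (by have := hNge i; omega)
    rw [← this]
    exact ⟨_, rfl⟩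
  -- key telescoping identity
  have key : ∀ i, y i - f i (y (i + 1)) = a i - t i := by
    intro i
    have h1 : f i (y (i + 1)) = ∑ j ∈ Finset.range (N (i + 1)), G i (j + 1) := by
      rw [hy, map_sum]
      refine Finset.sum_congr rfl fun j _ => ?_
      show f i (iterTrans f (i + 1) j (a (i + 1 + j))) = _
      rw [iter_left f i j, a_cA]
    have h2 : ∑ j ∈ Finset.range (N (i + 1)), G i (j + 1)
        = ∑ j ∈ Finset.Ico 1 (N (i + 1) + 1), G i j := by
      rw [Finset.sum_Ico_eq_sum_range]
      simp only [Nat.add_sub_cancel]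
      exact Finset.sum_congr rfl fun j _ => by rw [Nat.add_comm]
    have h3 : ∑ j ∈ Finset.Ico 1 (N (i + 1) + 1), G i j
        = ∑ j ∈ Finset.Ico 1 (N i), G i j + t i := by
      rw [htdef]
      exact (Finset.sum_Ico_consecutive _ (by have := hNge i; omega)
        (by have := hNmono i; omega)).symm
    have h4 : y i = G i 0 + ∑ j ∈ Finset.Ico 1 (N i), G i j := by
      rw [hy]; beta_reduce; rw [Finset.range_eq_Ico]
      exact Finset.sum_eq_sum_Ico_succ_bot (by have := hNge i; omega) _
    have h5 : G i 0 = a i := rfl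
    rw [h1, h2, h3, h4, h5]; abel
  obtain ⟨z, hz⟩ := exists_chain f A' t hsurj ht
  refine ⟨fun i => y i + z i, fun i => ?_⟩
  have := key i
  have := hz i
  simp only [map_add]
  have expand : y i + z i - (f i (y (i + 1)) + f i (z (i + 1)))
      = (y i - f i (y (i + 1))) + (z i - f i (z (i + 1))) := by abel
  rw [expand, key i, hz i]; abel

set_option linter.unusedSectionVars true

/-- Let `0 → (Aᵢ) → (Bᵢ) → (Cᵢ) → 0` be a short exact sequence of inverse systems of
abelian groups indexed by `ℕ`.  If `(Aᵢ)` satisfies the Mittag-Leffler condition, then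
the induced sequence `0 → lim Aᵢ → lim Bᵢ → lim Cᵢ → 0` of inverse limits is exact. -/
theorem stmt_2 {A B C : ℕ → Type*}
    [∀ i, AddCommGroup (A i)] [∀ i, AddCommGroup (B i)] [∀ i, AddCommGroup (C i)]
    (f : ∀ i, A (i + 1) →+ A i) (g : ∀ i, B (i + 1) →+ B i) (h : ∀ i, C (i + 1) →+ C i)
    (α : ∀ i, A i →+ B i) (β : ∀ i, B i →+ C i)
    (hα : ∀ i, (α i).comp (f i) = (g i).comp (α (i + 1)))
    (hβ : ∀ i, (β i).comp (g i) = (h i).comp (β (i + 1)))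
    (hinj : ∀ i, Function.Injective (α i))
    (hsurj : ∀ i, Function.Surjective (β i))
    (hexact : ∀ i, (α i).range = (β i).ker)
    (hML : MittagLeffler f) :
    -- exactness at `lim A`: the induced map `lim A → lim B` is injective
    (∀ a ∈ invLim f, (∀ i, α i (a i) = 0) → a = 0) ∧
    -- exactness at `lim B`
    (∀ b ∈ invLim g, (∀ i, β i (b i) = 0) → ∃ a ∈ invLim f, ∀ i, α i (a i) = b i) ∧
    -- exactness at `lim C`: the induced map `lim B → lim C` is surjective
    (∀ c ∈ invLim h, ∃ b ∈ invLim g, ∀ i, β i (b i) = c i) := by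
  have hα' : ∀ i x, α i (f i x) = g i (α (i + 1) x) := fun i x => DFunLike.congr_fun (hα i) x
  have hβ' : ∀ i x, β i (g i x) = h i (β (i + 1) x) := fun i x => DFunLike.congr_fun (hβ i) x
  have hαβ : ∀ i x, β i (α i x) = 0 := by
    intro i x
    have : α i x ∈ (β i).ker := by rw [← hexact i]; exact ⟨x, rfl⟩
    exact this
  refine ⟨?_, ?_, ?_⟩
  · intro a _ h0
    funext i
    refine hinj i ?_
    rw [h0 i]
    simp
  · intro b hb h0
    have hmem : ∀ i, b i ∈ (α i).range := by
      intro i; rw [hexact i]; exact h0 i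
    choose a ha using hmem
    refine ⟨a, ?_, ha⟩
    intro i
    apply hinj i
    rw [hα' i, ha (i + 1), ha i]
    exact hb i
  · intro c hc
    choose b0 hb0 using fun i => hsurj i (c i)
    have hd : ∀ i, g i (b0 (i + 1)) - b0 i ∈ (α i).range := by
      intro i
      rw [hexact i]
      show β i _ = 0
      rw [map_sub, hβ' i, hb0 (i + 1), hb0 i, hc i, sub_self]
    choose a ha using hd
    obtain ⟨x, hx⟩ := lim1_vanish f hML a
    refine ⟨fun i => b0 i + α i (x i), ?_, ?_⟩
    · intro i
      rw [map_add, ← hα' i, ]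
      have h1 : g i (b0 (i + 1)) = b0 i + α i (a i) := by rw [ha i]; abel
      rw [h1]
      have h2 : f i (x (i + 1)) = x i - a i := by
        have := hx i; rw [← this]; abel
      rw [h2, map_sub]
      abel
    · intro i
      rw [map_add, hαβ, add_zero, hb0]
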